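/- Restricted to [0,1), the periodized sums Σ_{k∈ℤ} χ_E((3/2)(ξ+k)) = 2·χ_{[1/3,2/3)}(ξ) and Σ_{k∈ℤ} χ_E(3(ξ+k)) = χ_{[1/6,1/3)}(ξ) + χ_{[2/3,5/6)}(ξ), where E = [−1,−1/2) ∪ [1/2,1). In particular these two sums have disjoint supports in [0,1). -/
import Mathlib

open MeasureTheory ENNReal

noncomputable section

def shannonSet : Set ℝ := Set.Ico (-1 : ℝ) (-(1/2)) ∪ Set.Ico (1/2 : ℝ) 1

lemma aux_notmem {c : ℝ} (hc : (3/2:ℝ) ≤ c) {ξ : ℝ} (h0 : 0 ≤ ξ) (h1 : ξ < 1)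
    {k : ℤ} (hk : k ∉ ({-1, 0} : Finset ℤ)) : c * (ξ + (k:ℝ)) ∉ shannonSet := by
  simp only [Finset.mem_insert, Finset.mem_singleton] at hk
  push_neg at hk
  have hkr : (1:ℝ) ≤ (k:ℝ) ∨ (k:ℝ) ≤ -2 := by
    have : (1:ℤ) ≤ k ∨ k ≤ -2 := by omega
    rcases this with h | h
    · left; exact_mod_cast h
    · right; exact_mod_cast h
  intro hmem
  rcases hmem with ⟨ha, hb⟩ | ⟨ha, hb⟩ <;> rcases hkr with h | h <;> nlinarith

lemma aux_tsum {c : ℝ} (hc : (3/2:ℝ) ≤ c) {ξ : ℝ} (h0 : 0 ≤ ξ) (h1 : ξ < 1) :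
    ∑' k : ℤ, shannonSet.indicator (fun _ => (1 : ℝ≥0∞)) (c * (ξ + (k : ℝ))) =
      shannonSet.indicator (fun _ => (1 : ℝ≥0∞)) (c * (ξ - 1)) +
        shannonSet.indicator (fun _ => (1 : ℝ≥0∞)) (c * ξ) := by
  rw [tsum_eq_sum (s := ({-1, 0} : Finset ℤ))
    (fun k hk => Set.indicator_of_notMem (aux_notmem hc h0 h1 hk) _)]
  rw [show ({-1, 0} : Finset ℤ) = insert (-1) {0} from rfl,
    Finset.sum_insert (by decide), Finset.sum_singleton]
  norm_num [sub_eq_add_neg]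

/-- restricted to `[0,1)`, `Σ_k χ_E((3/2)(ξ+k)) = 2·χ_{[1/3,2/3)}(ξ)` and
`Σ_k χ_E(3(ξ+k)) = χ_{[1/6,1/3)}(ξ) + χ_{[2/3,5/6)}(ξ)`, where `E = [−1,−1/2) ∪ [1/2,1)`;
in particular the two sums have disjoint supports in `[0,1)`. -/
theorem stmt15 :
    (∀ ξ ∈ Set.Ico (0 : ℝ) 1,
      ∑' k : ℤ, shannonSet.indicator (fun _ => (1 : ℝ≥0∞)) ((3/2) * (ξ + (k : ℝ))) =
        2 * (Set.Ico (1/3 : ℝ) (2/3)).indicator (fun _ => (1 : ℝ≥0∞)) ξ) ∧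
    (∀ ξ ∈ Set.Ico (0 : ℝ) 1,
      ∑' k : ℤ, shannonSet.indicator (fun _ => (1 : ℝ≥0∞)) (3 * (ξ + (k : ℝ))) =
        (Set.Ico (1/6 : ℝ) (1/3)).indicator (fun _ => (1 : ℝ≥0∞)) ξ +
          (Set.Ico (2/3 : ℝ) (5/6)).indicator (fun _ => (1 : ℝ≥0∞)) ξ) ∧
    (∀ ξ ∈ Set.Ico (0 : ℝ) 1,
      (∑' k : ℤ, shannonSet.indicator (fun _ => (1 : ℝ≥0∞)) ((3/2) * (ξ + (k : ℝ)))) = 0 ∨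
      (∑' k : ℤ, shannonSet.indicator (fun _ => (1 : ℝ≥0∞)) (3 * (ξ + (k : ℝ)))) = 0) := by
  have key1 : ∀ ξ ∈ Set.Ico (0 : ℝ) 1,
      ∑' k : ℤ, shannonSet.indicator (fun _ => (1 : ℝ≥0∞)) ((3/2) * (ξ + (k : ℝ))) =
        2 * (Set.Ico (1/3 : ℝ) (2/3)).indicator (fun _ => (1 : ℝ≥0∞)) ξ := by
    rintro ξ ⟨h0, h1⟩
    rw [aux_tsum le_rfl h0 h1]
    by_cases hξ : ξ ∈ Set.Ico (1/3 : ℝ) (2/3)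
    · obtain ⟨ha, hb⟩ := hξ
      have hm1 : (3/2:ℝ) * (ξ - 1) ∈ shannonSet := Or.inl ⟨by linarith, by linarith⟩
      have hm2 : (3/2:ℝ) * ξ ∈ shannonSet := Or.inr ⟨by linarith, by linarith⟩
      have hm3 : ξ ∈ Set.Ico (1/3 : ℝ) (2/3) := ⟨ha, hb⟩
      rw [Set.indicator_of_mem hm1, Set.indicator_of_mem hm2, Set.indicator_of_mem hm3]
      norm_num [two_mul]
    · rw [Set.mem_Ico, not_and_or, not_le, not_lt] at hξ
      have hn1 : (3/2:ℝ) * (ξ - 1) ∉ shannonSet := by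
        rintro (⟨ha, hb⟩ | ⟨ha, hb⟩) <;>
          first | linarith | (rcases hξ with h | h <;> linarith)
      have hn2 : (3/2:ℝ) * ξ ∉ shannonSet := by
        rintro (⟨ha, hb⟩ | ⟨ha, hb⟩) <;>
          first | linarith | (rcases hξ with h | h <;> linarith)
      rw [Set.indicator_of_notMem hn1, Set.indicator_of_notMem hn2,
        Set.indicator_of_notMem (by rw [Set.mem_Ico, not_and_or, not_le, not_lt]; exact hξ)]
      simp
  have key2 : ∀ ξ ∈ Set.Ico (0 : ℝ) 1,
      ∑' k : ℤ, shannonSet.indicator (fun _ => (1 : ℝ≥0∞)) (3 * (ξ + (k : ℝ))) =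
        (Set.Ico (1/6 : ℝ) (1/3)).indicator (fun _ => (1 : ℝ≥0∞)) ξ +
          (Set.Ico (2/3 : ℝ) (5/6)).indicator (fun _ => (1 : ℝ≥0∞)) ξ := by
    rintro ξ ⟨h0, h1⟩
    rw [aux_tsum (by norm_num) h0 h1]
    by_cases hA : ξ ∈ Set.Ico (1/6 : ℝ) (1/3)
    · obtain ⟨ha, hb⟩ := hA
      have hn1 : (3:ℝ) * (ξ - 1) ∉ shannonSet := by
        rintro (⟨h2, h3⟩ | ⟨h2, h3⟩) <;> linarith
      have hm2 : (3:ℝ) * ξ ∈ shannonSet := Or.inr ⟨by linarith, by linarith⟩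
      have hm3 : ξ ∈ Set.Ico (1/6 : ℝ) (1/3) := ⟨ha, hb⟩
      rw [Set.indicator_of_notMem hn1, Set.indicator_of_mem hm2, Set.indicator_of_mem hm3,
        Set.indicator_of_notMem (by rintro ⟨h2, h3⟩; linarith)]
      simp
    · by_cases hB : ξ ∈ Set.Ico (2/3 : ℝ) (5/6)
      · obtain ⟨ha, hb⟩ := hB
        have hm1 : (3:ℝ) * (ξ - 1) ∈ shannonSet := Or.inl ⟨by linarith, by linarith⟩
        have hn2 : (3:ℝ) * ξ ∉ shannonSet := by
          rintro (⟨h2, h3⟩ | ⟨h2, h3⟩) <;> linarith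
        have hm4 : ξ ∈ Set.Ico (2/3 : ℝ) (5/6) := ⟨ha, hb⟩
        rw [Set.indicator_of_mem hm1, Set.indicator_of_notMem hn2,
          Set.indicator_of_notMem hA, Set.indicator_of_mem hm4]
        simp
      · have hA' := hA
        have hB' := hB
        rw [Set.mem_Ico, not_and_or, not_le, not_lt] at hA' hB'
        have hn1 : (3:ℝ) * (ξ - 1) ∉ shannonSet := by
          rintro (⟨h2, h3⟩ | ⟨h2, h3⟩) <;>
            first | linarith | (rcases hB' with h | h <;> linarith)
        have hn2 : (3:ℝ) * ξ ∉ shannonSet := by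
          rintro (⟨h2, h3⟩ | ⟨h2, h3⟩) <;>
            first | linarith | (rcases hA' with h | h <;> linarith)
        rw [Set.indicator_of_notMem hn1, Set.indicator_of_notMem hn2,
          Set.indicator_of_notMem hA, Set.indicator_of_notMem hB]
  refine ⟨key1, key2, ?_⟩
  intro ξ hξ
  rw [key1 ξ hξ, key2 ξ hξ]
  by_cases h : ξ ∈ Set.Ico (1/3 : ℝ) (2/3)
  · right
    obtain ⟨ha, hb⟩ := h
    rw [Set.indicator_of_notMem (by rintro ⟨h2, h3⟩; linarith),
      Set.indicator_of_notMem (by rintro ⟨h2, h3⟩; linarith)]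
    simp
  · left
    rw [Set.indicator_of_notMem h]
    simp
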